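/- Let d be a positive integer, Voc a finite set with V ⊆ Voc, and suppose the vectors {E(v)}_{v∈Voc} ∪ {E_s(v)}_{v∈Voc} in ℝ^d satisfy ⟨E(u), E(v)⟩ = 1{u=v}, ⟨E_s(u), E_s(v)⟩ = 1{u=v}, and ⟨E(u), E_s(v)⟩ = 0 for all u, v ∈ Voc. Enumerate the edge set E as (s_1→t_1), …, (s_m→t_m) and set h_i = E_s(s_i) + E(t_i). Let μ > 0, let λ_u > 0 for each u ∈ N_c, and set h = Σ_{u∈N_c} λ_u·E(u) and W = μ·Σ_{u∈V} E(u)·E_s(u)^T. Define β_v = ⟨E(v), h + Σ_{i=1}^m (h^T W h_i)·h_i⟩ for v ∈ V. Then β_v = λ_v·1{v ∈ N_c} + μ·Σ_{u ∈ N_c : (u→v) ∈ E} λ_u for every v ∈ V; moreover β_v ≥ 0 for all v, β_v > 0 for every v ∈ N_{c+1}, and β_v = 0 for every v ∉ N_{c+1}, i.e., the support of (β_v)_{v∈V} is exactly the one-step expansion N_{c+1}. -/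

import Mathlib

open Finset Filter Matrix

variable {V : Type*}

/-- `ball E r j` : set of vertices reachable from `r` within `j` steps along edges in `E`. -/
def ball [Fintype V] [DecidableEq V] (E : Finset (V × V)) (r : V) : ℕ → Finset V
  | 0 => {r}
  | j + 1 => Finset.univ.filter fun v => v ∈ ball E r j ∨ ∃ u ∈ ball E r j, (u, v) ∈ E

/-- in-degree of `v` restricted to sources in `N_c`. -/
def degc [Fintype V] [DecidableEq V] (E : Finset (V × V)) (r : V) (c : ℕ) (v : V) : ℕ :=
  ((ball E r c).filter fun u => (u, v) ∈ E).card

/-- λ = 1/√K with K = |N_c|. -/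
noncomputable def lamc [Fintype V] [DecidableEq V] (E : Finset (V × V)) (r : V) (c : ℕ) : ℝ :=
  1 / Real.sqrt ((ball E r c).card : ℝ)

/-- the logit ξ_v(μ). -/
noncomputable def xi [Fintype V] [DecidableEq V] (E : Finset (V × V)) (r : V) (c : ℕ)
    (μ : V → ℝ) (v : V) : ℝ :=
  lamc E r c * (if v ∈ ball E r c then 1 else 0)
    + lamc E r c * ∑ u ∈ (ball E r c).filter (fun u => (u, v) ∈ E), μ u

/-- BFS loss. -/
noncomputable def bfsLoss [Fintype V] [DecidableEq V] (E : Finset (V × V)) (r : V) (c : ℕ)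
    (μ : V → ℝ) : ℝ :=
  - Real.log ((∑ v ∈ ball E r (c + 1), Real.exp (xi E r c μ v)) /
      ∑ v : V, Real.exp (xi E r c μ v))

/-- edge set of the permuted instance. -/
def permE [Fintype V] [DecidableEq V] (π : Equiv.Perm V) (E : Finset (V × V)) :
    Finset (V × V) :=
  E.image fun e => (π e.1, π e.2)

/-- permutation-averaged BFS loss. -/
noncomputable def avgBfsLoss [Fintype V] [DecidableEq V] (E : Finset (V × V)) (r : V) (c : ℕ)
    (μ : V → ℝ) : ℝ :=
  ((Nat.factorial (Fintype.card V) : ℝ))⁻¹ *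
    ∑ π : Equiv.Perm V, bfsLoss (permE π E) (π r) c μ

/-- coconut loss with target `p`. -/
noncomputable def cocoLoss [Fintype V] [DecidableEq V] (E : Finset (V × V)) (r : V) (c : ℕ)
    (p : V) (μ : V → ℝ) : ℝ :=
  - Real.log (Real.exp (xi E r c μ p) / ∑ v : V, Real.exp (xi E r c μ v))

/-- permutation-averaged coconut loss. -/
noncomputable def avgCocoLoss [Fintype V] [DecidableEq V] (E : Finset (V × V)) (r : V) (c : ℕ)
    (p : V) (μ : V → ℝ) : ℝ :=
  ((Nat.factorial (Fintype.card V) : ℝ))⁻¹ *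
    ∑ π : Equiv.Perm V, cocoLoss (permE π E) (π r) c (π p) μ

/-- the scalar function F. -/
noncomputable def Fc [Fintype V] [DecidableEq V] (E : Finset (V × V)) (r : V) (c : ℕ)
    (x : ℝ) : ℝ :=
  (∑ u ∈ ball E r (c + 1), (degc E r c u : ℝ) *
      Real.exp (lamc E r c * ((if u ∈ ball E r c then 1 else 0) + x * (degc E r c u : ℝ))))
    / ((∑ u ∈ ball E r (c + 1),
        Real.exp (lamc E r c * ((if u ∈ ball E r c then 1 else 0) + x * (degc E r c u : ℝ))))
      + ((Fintype.card V : ℝ) - ((ball E r (c + 1)).card : ℝ)))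

private lemma dotProduct_finset_sum {d : ℕ} {ι : Type*} (s : Finset ι)
    (a : Fin d → ℝ) (f : ι → Fin d → ℝ) :
    a ⬝ᵥ (∑ x ∈ s, f x) = ∑ x ∈ s, a ⬝ᵥ f x := by
  simp only [dotProduct, Finset.sum_apply, Finset.mul_sum]
  exact Finset.sum_comm

private lemma finset_sum_mulVec {d : ℕ} {ι : Type*} (s : Finset ι)
    (M : ι → Matrix (Fin d) (Fin d) ℝ) (x : Fin d → ℝ) :
    (∑ u ∈ s, M u) *ᵥ x = ∑ u ∈ s, M u *ᵥ x := by
  classical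
  induction s using Finset.induction_on with
  | empty => simp
  | insert a s hnot ih => simp [Finset.sum_insert hnot, Matrix.add_mulVec, ih]

private lemma vecMulVec_mulVec_aux {d : ℕ} (w v x : Fin d → ℝ) :
    (vecMulVec w v) *ᵥ x = (v ⬝ᵥ x) • w := by
  ext i
  simp only [Matrix.mulVec, Matrix.vecMulVec_apply, dotProduct, Pi.smul_apply, smul_eq_mul,
    Finset.sum_mul]
  exact Finset.sum_congr rfl fun k _ => by ring

/-- one-hop expansion of continuous thoughts: the token-projected output
has coefficients β_v = λ_v·1{v ∈ N_c} + μ·Σ_{u ∈ N_c : (u→v) ∈ E} λ_u, which are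
nonnegative, strictly positive exactly on N_{c+1}, and zero outside N_{c+1}. -/
theorem stmt12 {V Voc : Type*} [Fintype V] [DecidableEq V] [Fintype Voc] [DecidableEq Voc]
    (E : Finset (V × V)) (r : V) (c : ℕ)
    (d : ℕ) (hd : 0 < d) (j : V ↪ Voc)
    (Emb Es : Voc → Fin d → ℝ)
    (horthE : ∀ u v : Voc, Emb u ⬝ᵥ Emb v = if u = v then (1 : ℝ) else 0)
    (horthS : ∀ u v : Voc, Es u ⬝ᵥ Es v = if u = v then (1 : ℝ) else 0)
    (horthC : ∀ u v : Voc, Emb u ⬝ᵥ Es v = 0)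
    (μ : ℝ) (hμ : 0 < μ)
    (lam : V → ℝ) (hlam : ∀ u ∈ ball E r c, 0 < lam u)
    (h : Fin d → ℝ) (hh : h = ∑ u ∈ ball E r c, lam u • Emb (j u))
    (W : Matrix (Fin d) (Fin d) ℝ)
    (hW : W = μ • ∑ u : V, vecMulVec (Emb (j u)) (Es (j u)))
    (he : V × V → Fin d → ℝ) (hhe : ∀ e : V × V, he e = Es (j e.1) + Emb (j e.2))
    (β : V → ℝ)
    (hβ : ∀ v : V, β v = Emb (j v) ⬝ᵥ (h + ∑ e ∈ E, (h ⬝ᵥ (W *ᵥ he e)) • he e)) :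
    ∀ v : V,
      (β v = lam v * (if v ∈ ball E r c then 1 else 0)
          + μ * ∑ u ∈ (ball E r c).filter (fun u => (u, v) ∈ E), lam u)
      ∧ 0 ≤ β v
      ∧ (v ∈ ball E r (c + 1) → 0 < β v)
      ∧ (v ∉ ball E r (c + 1) → β v = 0) := by
  have hEdotH : ∀ v : V, Emb (j v) ⬝ᵥ h = if v ∈ ball E r c then lam v else 0 := by
    intro v
    rw [hh, dotProduct_finset_sum]
    have key : ∀ u ∈ ball E r c,
        Emb (j v) ⬝ᵥ (lam u • Emb (j u)) = if u = v then lam u else 0 := by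
      intro u _
      rw [dotProduct_smul, horthE, smul_eq_mul]
      by_cases huv : u = v
      · simp [huv]
      · have hj : j v ≠ j u := fun hj => huv (j.injective hj.symm)
        simp [huv, hj]
    rw [Finset.sum_congr rfl key, Finset.sum_ite_eq' (ball E r c) v lam]
  have hWhe : ∀ e : V × V, W *ᵥ he e = μ • Emb (j e.1) := by
    intro e
    rw [hW, hhe, Matrix.smul_mulVec, finset_sum_mulVec]
    congr 1
    have key : ∀ u ∈ (Finset.univ : Finset V),
        (vecMulVec (Emb (j u)) (Es (j u))) *ᵥ (Es (j e.1) + Emb (j e.2))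
          = if u = e.1 then Emb (j e.1) else 0 := by
      intro u _
      have h0 : Es (j u) ⬝ᵥ Emb (j e.2) = 0 := by
        rw [dotProduct_comm]; exact horthC _ _
      rw [vecMulVec_mulVec_aux, dotProduct_add, horthS, h0, add_zero]
      by_cases hu : u = e.1
      · simp [hu]
      · have hj : j u ≠ j e.1 := fun hj => hu (j.injective hj)
        simp [hu, hj]
    rw [Finset.sum_congr rfl key]
    simp
  have hEdotHe : ∀ (v : V) (e : V × V),
      Emb (j v) ⬝ᵥ he e = if v = e.2 then 1 else 0 := by
    intro v e
    rw [hhe, dotProduct_add, horthC, horthE, zero_add]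
    by_cases hv : v = e.2
    · simp [hv]
    · have hj : j v ≠ j e.2 := fun hj => hv (j.injective hj)
      simp [hv, hj]
  have hβ' : ∀ v : V, β v = lam v * (if v ∈ ball E r c then 1 else 0)
      + μ * ∑ u ∈ (ball E r c).filter (fun u => (u, v) ∈ E), lam u := by
    intro v
    rw [hβ, dotProduct_add, dotProduct_finset_sum]
    have h1 : Emb (j v) ⬝ᵥ h = lam v * (if v ∈ ball E r c then 1 else 0) := by
      rw [hEdotH]; by_cases hv : v ∈ ball E r c <;> simp [hv]
    have h2 : ∀ e ∈ E, Emb (j v) ⬝ᵥ ((h ⬝ᵥ (W *ᵥ he e)) • he e)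
        = (if e.1 ∈ ball E r c ∧ v = e.2 then μ * lam e.1 else 0) := by
      intro e _
      rw [dotProduct_smul, hWhe, dotProduct_smul, dotProduct_comm, hEdotH, hEdotHe]
      by_cases ha : e.1 ∈ ball E r c <;> by_cases hb : v = e.2 <;>
        simp [ha, hb, smul_eq_mul] <;> ring
    rw [h1, Finset.sum_congr rfl h2, Finset.sum_ite, Finset.sum_const_zero, add_zero]
    congr 1
    rw [Finset.mul_sum]
    refine Finset.sum_nbij' (fun e => e.1) (fun u => (u, v)) ?_ ?_ ?_ ?_ ?_
    · rintro ⟨a, b⟩ hab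
      rw [Finset.mem_filter] at hab ⊢
      obtain ⟨hE, hc, hv⟩ := hab
      subst hv
      exact ⟨hc, hE⟩
    · intro u hu
      rw [Finset.mem_filter] at hu ⊢
      exact ⟨hu.2, hu.1, rfl⟩
    · rintro ⟨a, b⟩ hab
      rw [Finset.mem_filter] at hab
      obtain ⟨hE, hc, hv⟩ := hab
      subst hv
      exact rfl
    · intro u hu; rfl
    · rintro ⟨a, b⟩ hab; rfl
  intro v
  have hsum_nonneg : 0 ≤ ∑ u ∈ (ball E r c).filter (fun u => (u, v) ∈ E), lam u :=
    Finset.sum_nonneg fun u hu => (hlam u (Finset.mem_filter.mp hu).1).le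
  refine ⟨hβ' v, ?_, ?_, ?_⟩
  · rw [hβ' v]
    by_cases hv : v ∈ ball E r c
    · simp only [hv, if_pos, mul_one]
      exact add_nonneg (hlam v hv).le (mul_nonneg hμ.le hsum_nonneg)
    · simp only [hv, if_neg, mul_zero, not_false_iff, zero_add]
      exact mul_nonneg hμ.le hsum_nonneg
  · intro hv
    rw [hβ' v]
    have hv' : v ∈ ball E r c ∨ ∃ u ∈ ball E r c, (u, v) ∈ E := by
      have := hv
      simp only [ball, Finset.mem_filter, Finset.mem_univ, true_and] at this
      exact this
    rcases hv' with hv' | ⟨u, hu, huv⟩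
    · simp only [hv', if_pos, mul_one]
      exact add_pos_of_pos_of_nonneg (hlam v hv') (mul_nonneg hμ.le hsum_nonneg)
    · have hpos : 0 < ∑ u ∈ (ball E r c).filter (fun u => (u, v) ∈ E), lam u := by
        refine Finset.sum_pos' (fun w hw => (hlam w (Finset.mem_filter.mp hw).1).le) ?_
        exact ⟨u, Finset.mem_filter.mpr ⟨hu, huv⟩, hlam u hu⟩
      refine add_pos_of_nonneg_of_pos ?_ (mul_pos hμ hpos)
      by_cases hvc : v ∈ ball E r c
      · simp [hvc, (hlam v hvc).le]
      · simp [hvc]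
  · intro hv
    rw [hβ' v]
    have hnotc : v ∉ ball E r c := fun hc => hv (by
      simp only [ball, Finset.mem_filter, Finset.mem_univ, true_and]
      exact Or.inl hc)
    have hempty : (ball E r c).filter (fun u => (u, v) ∈ E) = ∅ := by
      rw [Finset.filter_eq_empty_iff]
      intro u hu huv
      exact hv (by
        simp only [ball, Finset.mem_filter, Finset.mem_univ, true_and]
        exact Or.inr ⟨u, hu, huv⟩)
    simp [hnotc, hempty]
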